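/- The Charlier polynomials satisfy the connection formula c_n^{(μ)}(x) = ∑_{m=0}^n (−1)^n (ν^m/μ^n) (ν−μ)^{n−m} ((−n)_m/m!) c_m^{(ν)}(x) for nonzero μ, ν. -/

import Mathlib

open Finset

/-- Pochhammer symbol `(a)_k = a(a+1)⋯(a+k−1)`. -/
noncomputable def poch (a : ℝ) (k : ℕ) : ℝ := ∏ j ∈ Finset.range k, (a + j)

/-- Charlier polynomial `c_n^{(μ)}(x) = ∑_{k=0}^n (−n)_k (−x)_k (−1/μ)^k / k!`. -/
noncomputable def charlier (n : ℕ) (μ x : ℝ) : ℝ :=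
  ∑ k ∈ Finset.range (n + 1),
    poch (-(n : ℝ)) k * poch (-x) k * (-1 / μ) ^ k / (Nat.factorial k)

lemma poch_neg_natCast (n k : ℕ) :
    poch (-(n : ℝ)) k = (-1) ^ k * (n.descFactorial k : ℝ) := by
  induction k with
  | zero => simp [poch]
  | succ k ih =>
    rw [poch, Finset.prod_range_succ, ← poch, ih, Nat.descFactorial_succ]
    by_cases h : k ≤ n
    · have : ((n - k : ℕ) : ℝ) = (n : ℝ) - k := by
        push_cast [h]; ring
      push_cast [this]
      ring
    · have h0 : n.descFactorial k = 0 :=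
        Nat.descFactorial_eq_zero_iff_lt.mpr (lt_of_not_ge h)
      simp [h0]

lemma charlier_hsum (n k : ℕ) (μ ν : ℝ) (hμ : μ ≠ 0) (hν : ν ≠ 0) (hk : k ≤ n) :
    ∑ m ∈ Finset.range (n + 1),
      ((-1 : ℝ) ^ n * (ν ^ m / μ ^ n) * (ν - μ) ^ (n - m) *
          ((-1) ^ m * (n.descFactorial m : ℝ) / (Nat.factorial m))) *
        ((-1) ^ k * (m.descFactorial k : ℝ) * (-1 / ν) ^ k / (Nat.factorial k)) =
      (-1) ^ k * (n.descFactorial k : ℝ) * (-1 / μ) ^ k / (Nat.factorial k) := by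
  set N := n - k with hN
  have hkN : k + N = n := by omega
  have hsub : Finset.Ico k (n + 1) ⊆ Finset.range (n + 1) := by
    intro m hm
    simp only [Finset.mem_Ico] at hm
    simp only [Finset.mem_range]
    omega
  have hzero : ∀ m ∈ Finset.range (n + 1), m ∉ Finset.Ico k (n + 1) →
      ((-1 : ℝ) ^ n * (ν ^ m / μ ^ n) * (ν - μ) ^ (n - m) *
          ((-1) ^ m * (n.descFactorial m : ℝ) / (Nat.factorial m))) *
        ((-1) ^ k * (m.descFactorial k : ℝ) * (-1 / ν) ^ k / (Nat.factorial k)) = 0 := by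
    intro m hm hm'
    have hmk : m < k := by
      simp only [Finset.mem_range] at hm
      simp only [Finset.mem_Ico] at hm'
      omega
    have h0 : m.descFactorial k = 0 := Nat.descFactorial_eq_zero_iff_lt.mpr hmk
    rw [h0]
    simp
  rw [← Finset.sum_subset hsub hzero, Finset.sum_Ico_eq_sum_range]
  have hrange : n + 1 - k = N + 1 := by omega
  rw [hrange]
  have hterm : ∀ j ∈ Finset.range (N + 1),
      ((-1 : ℝ) ^ n * (ν ^ (k + j) / μ ^ n) * (ν - μ) ^ (n - (k + j)) *
          ((-1) ^ (k + j) * (n.descFactorial (k + j) : ℝ) / (Nat.factorial (k + j)))) *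
        ((-1) ^ k * ((k + j).descFactorial k : ℝ) * (-1 / ν) ^ k / (Nat.factorial k))
      = ((-ν) ^ j * (ν - μ) ^ (N - j) * (N.choose j : ℝ)) *
          ((-1) ^ (n + k) * (n.choose k : ℝ) / μ ^ n) := by
    intro j hj
    have hjN : j ≤ N := by
      simp only [Finset.mem_range] at hj; omega
    have hkjn : k + j ≤ n := by omega
    have hsub2 : n - (k + j) = N - j := by omega
    have hchoose : n.choose (k + j) * (k + j).choose k = n.choose k * N.choose j := by
      have := Nat.choose_mul (n := n) (k := k + j) (s := k) (Nat.le_add_right k j)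
      simpa [hN, Nat.add_sub_cancel_left] using this
    have hck : (((k + j).choose k : ℝ)) ≠ 0 := by
      exact_mod_cast (Nat.choose_pos (Nat.le_add_right k j)).ne'
    have hc : ((n.choose (k + j) : ℕ) : ℝ) =
        (n.choose k : ℝ) * (N.choose j : ℝ) / ((k + j).choose k : ℝ) := by
      field_simp
      exact_mod_cast hchoose
    have hdesc1 : (n.descFactorial (k + j) : ℝ) =
        (Nat.factorial (k + j) : ℝ) * (n.choose (k + j) : ℝ) := by
      rw [← Nat.cast_mul, ← Nat.descFactorial_eq_factorial_mul_choose]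
    have hdesc2 : ((k + j).descFactorial k : ℝ) =
        (Nat.factorial k : ℝ) * ((k + j).choose k : ℝ) := by
      rw [← Nat.cast_mul, ← Nat.descFactorial_eq_factorial_mul_choose]
    have hfac1 : (Nat.factorial (k + j) : ℝ) ≠ 0 := by
      exact_mod_cast (Nat.factorial_pos (k + j)).ne'
    have hfac2 : (Nat.factorial k : ℝ) ≠ 0 := by
      exact_mod_cast (Nat.factorial_pos k).ne'
    rw [hsub2, hdesc1, hdesc2, hc]
    field_simp
    ring_nf
    rw [show ((-1 : ℝ)) ^ (k * 3) = (-1) ^ k by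
      rw [show k * 3 = k + 2 * k by omega, pow_add, pow_mul]; norm_num]
    have hνk : ν ^ k * ν⁻¹ ^ k = 1 := by rw [← mul_pow, mul_inv_cancel₀ hν, one_pow]
    linear_combination (ν ^ j * (n.choose k : ℝ) * (N.choose j : ℝ) * (-1) ^ n * (-1) ^ k * (-1) ^ j * (ν - μ) ^ (N - j)) * hνk
  rw [Finset.sum_congr rfl hterm, ← Finset.sum_mul]
  have hbin : ∑ j ∈ Finset.range (N + 1), (-ν) ^ j * (ν - μ) ^ (N - j) * (N.choose j : ℝ)
      = (-μ) ^ N := by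
    rw [← add_pow]
    congr 1
    ring
  rw [hbin]
  have hdesc : (n.descFactorial k : ℝ) = (Nat.factorial k : ℝ) * (n.choose k : ℝ) := by
    rw [← Nat.cast_mul, ← Nat.descFactorial_eq_factorial_mul_choose]
  have hμn : μ ^ n = μ ^ N * μ ^ k := by rw [← pow_add]; congr 1; omega
  have hfac2 : (Nat.factorial k : ℝ) ≠ 0 := by
    exact_mod_cast (Nat.factorial_pos k).ne'
  have hsign2 : ((-1 : ℝ)) ^ N * (-1) ^ (n + k) = (-1) ^ k * (-1) ^ k := by
    have h2 : N + (n + k) = 2 * n := by omega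
    have h3 : k + k = 2 * k := by omega
    rw [← pow_add, ← pow_add, h2, h3, pow_mul, pow_mul]
    norm_num
  rw [hdesc, neg_pow μ N, hμn]
  field_simp
  ring_nf
  have hμk : μ ^ k * μ⁻¹ ^ k = 1 := by rw [← mul_pow, mul_inv_cancel₀ hμ, one_pow]
  linear_combination ((n.choose k : ℝ)) * hsign2 - (n.choose k : ℝ) * (-1 : ℝ) ^ (k * 2) * hμk

theorem charlier_connection (n : ℕ) (μ ν : ℝ) (hμ : μ ≠ 0) (hν : ν ≠ 0) (x : ℝ) :
    charlier n μ x =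
      ∑ m ∈ Finset.range (n + 1),
        (-1 : ℝ) ^ n * (ν ^ m / μ ^ n) * (ν - μ) ^ (n - m) *
          (poch (-(n : ℝ)) m / (Nat.factorial m)) * charlier m ν x := by
  have key : ∀ k ∈ Finset.range (n + 1),
      poch (-(n : ℝ)) k * poch (-x) k * (-1 / μ) ^ k / (Nat.factorial k) =
      ∑ m ∈ Finset.range (n + 1),
        ((-1 : ℝ) ^ n * (ν ^ m / μ ^ n) * (ν - μ) ^ (n - m) *
            (poch (-(n : ℝ)) m / (Nat.factorial m))) *
          (poch (-(m : ℝ)) k * poch (-x) k * (-1 / ν) ^ k / (Nat.factorial k)) := by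
    intro k hk
    have hkn : k ≤ n := by simp only [Finset.mem_range] at hk; omega
    have hre : ∀ m ∈ Finset.range (n + 1),
        ((-1 : ℝ) ^ n * (ν ^ m / μ ^ n) * (ν - μ) ^ (n - m) *
            (poch (-(n : ℝ)) m / (Nat.factorial m))) *
          (poch (-(m : ℝ)) k * poch (-x) k * (-1 / ν) ^ k / (Nat.factorial k))
        = (((-1 : ℝ) ^ n * (ν ^ m / μ ^ n) * (ν - μ) ^ (n - m) *
            ((-1) ^ m * (n.descFactorial m : ℝ) / (Nat.factorial m))) *
          ((-1) ^ k * (m.descFactorial k : ℝ) * (-1 / ν) ^ k / (Nat.factorial k))) *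
            poch (-x) k := by
      intro m _
      rw [poch_neg_natCast, poch_neg_natCast]
      ring
    rw [Finset.sum_congr rfl hre, ← Finset.sum_mul,
      charlier_hsum n k μ ν hμ hν hkn, poch_neg_natCast]
    ring
  calc charlier n μ x
      = ∑ k ∈ Finset.range (n + 1), ∑ m ∈ Finset.range (n + 1),
          ((-1 : ℝ) ^ n * (ν ^ m / μ ^ n) * (ν - μ) ^ (n - m) *
              (poch (-(n : ℝ)) m / (Nat.factorial m))) *
            (poch (-(m : ℝ)) k * poch (-x) k * (-1 / ν) ^ k / (Nat.factorial k)) := by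
        unfold charlier
        exact Finset.sum_congr rfl key
    _ = ∑ m ∈ Finset.range (n + 1), ∑ k ∈ Finset.range (n + 1),
          ((-1 : ℝ) ^ n * (ν ^ m / μ ^ n) * (ν - μ) ^ (n - m) *
              (poch (-(n : ℝ)) m / (Nat.factorial m))) *
            (poch (-(m : ℝ)) k * poch (-x) k * (-1 / ν) ^ k / (Nat.factorial k)) :=
        Finset.sum_comm
    _ = _ := by
        refine Finset.sum_congr rfl fun m hm => ?_
        have hmn : m ≤ n := by simp only [Finset.mem_range] at hm; omega
        rw [charlier, Finset.mul_sum]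
        symm
        apply Finset.sum_subset
        · exact Finset.range_subset_range.mpr (by omega)
        · intro k hk hk'
          have hmk : m < k := by
            simp only [Finset.mem_range] at hk hk'; omega
          have h0 : m.descFactorial k = 0 := Nat.descFactorial_eq_zero_iff_lt.mpr hmk
          simp [poch_neg_natCast, h0]
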